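/- Let a ≥ 0 and C ∈ ℝ, and let v : ℝ → ℝ be twice continuously differentiable on (a,∞) and satisfy, for all r > a, the radial Hamiltonian stationary ODE with n = 2: v''(r)/(1+v'(r)^2) + (r·v'(r) − v(r))/(r^2+v(r)^2) = C·(1+v'(r)^2)^{1/2}/(r^2+v(r)^2)^{1/2}. If the phase θ(r) = arctan(v'(r)) + arctan(v(r)/r) converges as r → ∞ to a limit L ≠ 0, then C = 0, i.e., the solution is special Lagrangian. -/

import Mathlib

lemma aux_pos (a C : ℝ) (ha : 0 ≤ a) (v : ℝ → ℝ)
    (hv : ContDiffOn ℝ 2 v (Set.Ioi a))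
    (hode : ∀ r ∈ Set.Ioi a,
      deriv (deriv v) r / (1 + (deriv v r) ^ 2)
        + (r * deriv v r - v r) / (r ^ 2 + (v r) ^ 2)
        = C * Real.sqrt (1 + (deriv v r) ^ 2) / Real.sqrt (r ^ 2 + (v r) ^ 2))
    (hC : 0 < C) : False := by
  have hopen : IsOpen (Set.Ioi a) := isOpen_Ioi
  have h2 : (2 : WithTop ℕ∞) = 1 + 1 := by norm_num
  rw [h2, contDiffOn_succ_iff_deriv_of_isOpen hopen] at hv
  obtain ⟨hdv, -, hdv2⟩ := hv
  -- differentiability of v and deriv v at points of Ioi a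
  have hvd : ∀ r ∈ Set.Ioi a, HasDerivAt v (deriv v r) r := fun r hr =>
    ((hdv.differentiableAt (hopen.mem_nhds hr)).hasDerivAt)
  have hvd2 : ∀ r ∈ Set.Ioi a, HasDerivAt (deriv v) (deriv (deriv v) r) r := fun r hr =>
    (((hdv2.differentiableOn one_ne_zero).differentiableAt (hopen.mem_nhds hr)).hasDerivAt)
  set h : ℝ → ℝ := fun r =>
    Real.arctan (deriv v r) + Real.arctan (v r / r) - C / 2 * Real.log (r ^ 2 + (v r) ^ 2)
    with hh
  -- derivative of h and its nonnegativity
  have key : ∀ r ∈ Set.Ioi a, r > 0 → HasDerivAt h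
      (C * Real.sqrt (1 + (deriv v r) ^ 2) / Real.sqrt (r ^ 2 + (v r) ^ 2)
        - C * (r + v r * deriv v r) / (r ^ 2 + (v r) ^ 2)) r := by
    intro r hr hr0
    have hden : (0:ℝ) < r ^ 2 + (v r) ^ 2 := by positivity
    have h1 : HasDerivAt (fun x => Real.arctan (deriv v x))
        (deriv (deriv v) r / (1 + (deriv v r) ^ 2)) r := by
      have := (hvd2 r hr).arctan
      convert this using 1; field_simp
    have h2' : HasDerivAt (fun x => v x / x)
        ((deriv v r * r - v r * 1) / r ^ 2) r := (hvd r hr).div (hasDerivAt_id r) (ne_of_gt hr0)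
    have h3 : HasDerivAt (fun x => Real.arctan (v x / x))
        ((r * deriv v r - v r) / (r ^ 2 + (v r) ^ 2)) r := by
      have := h2'.arctan
      convert this using 1
      rw [div_pow]
      field_simp
    have h4 : HasDerivAt (fun x => x ^ 2 + (v x) ^ 2)
        (2 * r + 2 * v r * deriv v r) r := by
      have hp : HasDerivAt (fun x : ℝ => x ^ 2) (2 * r) r := by
        simpa using hasDerivAt_pow 2 r
      have hq : HasDerivAt (fun x => (v x) ^ 2) (2 * v r * deriv v r) r := by
        simpa using (hvd r hr).fun_pow 2
      exact hp.add hq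
    have h5 : HasDerivAt (fun x => Real.log (x ^ 2 + (v x) ^ 2))
        ((2 * r + 2 * v r * deriv v r) / (r ^ 2 + (v r) ^ 2)) r := by
      exact h4.log (ne_of_gt hden)
    have hD : HasDerivAt h
        (deriv (deriv v) r / (1 + (deriv v r) ^ 2)
          + (r * deriv v r - v r) / (r ^ 2 + (v r) ^ 2)
          - C / 2 * ((2 * r + 2 * v r * deriv v r) / (r ^ 2 + (v r) ^ 2))) r :=
      (h1.add h3).sub (h5.const_mul (C / 2))
    rw [hode r hr] at hD
    convert hD using 1
    field_simp
  -- the derivative is nonnegative by Cauchy-Schwarz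
  have hnonneg : ∀ r ∈ Set.Ioi a, r > 0 →
      0 ≤ C * Real.sqrt (1 + (deriv v r) ^ 2) / Real.sqrt (r ^ 2 + (v r) ^ 2)
        - C * (r + v r * deriv v r) / (r ^ 2 + (v r) ^ 2) := by
    intro r hr hr0
    have hden : (0:ℝ) < r ^ 2 + (v r) ^ 2 := by positivity
    set d := deriv v r
    have hs : Real.sqrt (r ^ 2 + (v r) ^ 2) > 0 := Real.sqrt_pos.mpr hden
    have hsq : Real.sqrt (r ^ 2 + (v r) ^ 2) ^ 2 = r ^ 2 + (v r) ^ 2 := Real.sq_sqrt hden.le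
    have hcs : r + v r * d ≤ Real.sqrt (1 + d ^ 2) * Real.sqrt (r ^ 2 + (v r) ^ 2) := by
      rcases le_or_gt (r + v r * d) 0 with h0 | h0
      · exact h0.trans (by positivity)
      · rw [← Real.sqrt_mul (by positivity)]
        rw [show r + v r * d = Real.sqrt ((r + v r * d) ^ 2) from (Real.sqrt_sq h0.le).symm]
        apply Real.sqrt_le_sqrt
        nlinarith [sq_nonneg (r * d - v r)]
    rw [sub_nonneg, div_le_div_iff₀ hden hs, mul_assoc]
    calc C * ((r + v r * d) * Real.sqrt (r ^ 2 + (v r) ^ 2))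
        ≤ C * (Real.sqrt (1 + d ^ 2)
            * (Real.sqrt (r ^ 2 + (v r) ^ 2) * Real.sqrt (r ^ 2 + (v r) ^ 2))) := by
          apply mul_le_mul_of_nonneg_left _ hC.le
          calc (r + v r * d) * Real.sqrt (r ^ 2 + (v r) ^ 2)
              ≤ Real.sqrt (1 + d ^ 2) * Real.sqrt (r ^ 2 + (v r) ^ 2)
                * Real.sqrt (r ^ 2 + (v r) ^ 2) :=
                mul_le_mul_of_nonneg_right hcs hs.le
            _ = _ := by ring
      _ = C * Real.sqrt (1 + d ^ 2) * (r ^ 2 + (v r) ^ 2) := by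
          rw [Real.mul_self_sqrt hden.le]; ring
  -- monotonicity of h on Ici b, b := a + 1
  set b := a + 1 with hb
  have hba : ∀ r, b ≤ r → r ∈ Set.Ioi a ∧ 0 < r := by
    intro r hrb
    constructor
    · exact lt_of_lt_of_le (by linarith) hrb
    · linarith
  have hmono : MonotoneOn h (Set.Ici b) := by
    apply monotoneOn_of_deriv_nonneg (convex_Ici b)
    · intro r hr
      obtain ⟨hr1, hr2⟩ := hba r hr
      exact ((key r hr1 hr2).continuousAt).continuousWithinAt
    · intro r hr
      rw [interior_Ici] at hr
      obtain ⟨hr1, hr2⟩ := hba r hr.le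
      exact ((key r hr1 hr2).differentiableAt).differentiableWithinAt
    · intro r hr
      rw [interior_Ici] at hr
      obtain ⟨hr1, hr2⟩ := hba r hr.le
      rw [(key r hr1 hr2).deriv]
      exact hnonneg r hr1 hr2
  clear_value h b
  -- conclude: θ(R) is bounded by π but grows like C log R
  obtain ⟨R, hRb, hRexp⟩ : ∃ R, b ≤ R ∧ Real.exp ((Real.pi - h b) / C) < R :=
    ⟨max b (Real.exp ((Real.pi - h b) / C)) + 1,
      (le_max_left _ _).trans (le_add_of_nonneg_right zero_le_one),
      (le_max_right _ _).trans_lt (lt_add_one _)⟩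
  have hR0 : 0 < R := by
    have : a + 1 ≤ R := hb ▸ hRb
    linarith
  have hlogR : (Real.pi - h b) / C < Real.log R :=
    calc (Real.pi - h b) / C = Real.log (Real.exp ((Real.pi - h b) / C)) :=
          (Real.log_exp _).symm
      _ < Real.log R := Real.log_lt_log (Real.exp_pos _) hRexp
  have hCc : Real.pi - h b < C * Real.log R := by
    rw [div_lt_iff₀ hC] at hlogR; linarith
  have hhb : h b ≤ h R := hmono (Set.self_mem_Ici) hRb hRb
  have hloggrow : Real.log (R ^ 2) ≤ Real.log (R ^ 2 + (v R) ^ 2) := by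
    apply Real.log_le_log (by positivity)
    nlinarith [sq_nonneg (v R)]
  have hθbound : Real.arctan (deriv v R) + Real.arctan (v R / R) < Real.pi := by
    have := Real.arctan_lt_pi_div_two (deriv v R)
    have := Real.arctan_lt_pi_div_two (v R / R)
    linarith [Real.pi_pos]
  have hθeq : Real.arctan (deriv v R) + Real.arctan (v R / R)
      = h R + C / 2 * Real.log (R ^ 2 + (v R) ^ 2) := by
    simp only [hh]; ring
  have hlogsq : Real.log (R ^ 2) = 2 * Real.log R := by
    rw [Real.log_pow]; push_cast; ring
  have hmul : C / 2 * Real.log (R ^ 2) ≤ C / 2 * Real.log (R ^ 2 + (v R) ^ 2) :=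
    mul_le_mul_of_nonneg_left hloggrow (by positivity)
  have heq : C / 2 * Real.log (R ^ 2) = C * Real.log R := by
    rw [hlogsq]; ring
  linarith


/-- (Proposition `easy proof` of Chen–Warren.)
If `v` is twice continuously differentiable on `(a, ∞)` (`a ≥ 0`) and solves the
radial Hamiltonian stationary ODE with `n = 2`, and the phase
`θ(r) = arctan v'(r) + arctan (v(r)/r)` converges as `r → ∞` to a nonzero limit `L`,
then `C = 0`, i.e. the solution is special Lagrangian. -/
theorem radial_hamiltonian_stationary_dim_two_nonzero_phase_limit
    (a C L : ℝ) (ha : 0 ≤ a) (v : ℝ → ℝ)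
    (hv : ContDiffOn ℝ 2 v (Set.Ioi a))
    (hode : ∀ r ∈ Set.Ioi a,
      deriv (deriv v) r / (1 + (deriv v r) ^ 2)
        + (r * deriv v r - v r) / (r ^ 2 + (v r) ^ 2)
        = C * Real.sqrt (1 + (deriv v r) ^ 2) / Real.sqrt (r ^ 2 + (v r) ^ 2))
    (hlim : Filter.Tendsto
      (fun r => Real.arctan (deriv v r) + Real.arctan (v r / r))
      Filter.atTop (nhds L))
    (hL : L ≠ 0) :
    C = 0 := by
  rcases lt_trichotomy C 0 with hC | hC | hC
  · exfalso
    set w : ℝ → ℝ := fun r => -v r with hw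
    have hdw : deriv w = fun r => -(deriv v r) := by
      funext x
      simp [hw, deriv.neg]
    apply aux_pos a (-C) ha w (hv.neg)
    · intro r hr
      have hdw2 : deriv (deriv w) r = -(deriv (deriv v) r) := by
        rw [hdw, deriv.fun_neg]
      rw [hdw2, hdw]
      simp only [hw]
      have := hode r hr
      rw [neg_sq, neg_sq]
      linear_combination (-1 : ℝ) * this
    · linarith
  · exact hC
  · exact absurd (aux_pos a C ha v hv hode hC) not_false
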